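/- Fourier transform of the Taylor-projected remainder (Lemma 6.3): For any χ_0 ∈ C_c^∞(ℝ), any d ∈ ℕ, any φ ∈ C_c^∞(ℝ), any ħ > 0 and all ξ ∈ ℝ: F_ħ[ (χ_0 φ) − ∑_{k=0}^{d} Π_k φ ](ξ) = ħ^{−1/2} ( Ψ̃(ξ/ħ) − ∑_{k=0}^{d} (1/k!) (ξ/ħ)^k Ψ̃^{(k)}(0) ), where Ψ̃ := F_1[χ_0 φ] is the unit-Planck-constant Fourier transform of χ_0 φ and the left-hand side is the ħ-Fourier transform of the tempered distribution (χ_0 φ) − ∑_{k=0}^{d} Π_k φ. -/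

import Mathlib

open MeasureTheory

/-- The unitary semiclassical Fourier transform
`(F_ħ φ)(ξ) = (2πħ)^{-1/2} ∫ e^{-ixξ/ħ} φ(x) dx`. -/
noncomputable def semiFourier (h : ℝ) (f : ℝ → ℂ) (ξ : ℝ) : ℂ :=
  ((Real.sqrt (2 * Real.pi * h) : ℝ) : ℂ)⁻¹ *
    ∫ x : ℝ, Complex.exp (-(Complex.I * x * ξ) / h) * f x

/-- The ħ-Fourier transform of the rank-one term
`Π_k φ = (1/k!) (∫ x^k χ₀(x) φ(x) dx) · δ^{(k)}`, namely
`ξ ↦ (1/k!) (∫ x^k χ₀ φ) (2πħ)^{-1/2} (−iξ/ħ)^k`. -/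
noncomputable def PiFT (χ₀ : ℝ → ℝ) (φ : ℝ → ℂ) (k : ℕ) (h ξ : ℝ) : ℂ :=
  ((k.factorial : ℂ))⁻¹ * (∫ x : ℝ, (x : ℂ) ^ k * (χ₀ x : ℂ) * φ x) *
    ((Real.sqrt (2 * Real.pi * h) : ℝ) : ℂ)⁻¹ * (-(Complex.I) * ξ / h) ^ k

open Real FourierTransform Complex

/-- Rescaling: `F_ħ g (ξ) = h^{-1/2} F_1 g (ξ/h)`. -/
lemma semiFourier_scale (g : ℝ → ℂ) (h : ℝ) (hh : 0 < h) (ξ : ℝ) :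
    semiFourier h g ξ = ((Real.sqrt h : ℝ) : ℂ)⁻¹ * semiFourier 1 g (ξ / h) := by
  have h0 : (h : ℂ) ≠ 0 := by exact_mod_cast hh.ne'
  unfold semiFourier
  simp only [Complex.ofReal_one]
  have hs : Real.sqrt (2 * Real.pi * h) = Real.sqrt (2 * Real.pi * 1) * Real.sqrt h := by
    rw [mul_one, ← Real.sqrt_mul (by positivity)]
  rw [hs]
  have : (fun x : ℝ => Complex.exp (-(Complex.I * x * ((ξ / h : ℝ) : ℂ)) / 1) * g x)
      = fun x : ℝ => Complex.exp (-(Complex.I * x * ξ) / h) * g x := by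
    funext x
    congr 1
    push_cast
    congr 1
    field_simp
  rw [this]
  push_cast
  ring

/-- `F_1 g` expressed through Mathlib's Fourier integral. -/
lemma semiFourier_one_eq (g : ℝ → ℂ) (ξ : ℝ) :
    semiFourier 1 g ξ =
      𝓕 (fun x => ((Real.sqrt (2 * Real.pi) : ℝ) : ℂ)⁻¹ * g x)
        ((2 * Real.pi)⁻¹ * ξ) := by
  rw [Real.fourier_eq']
  simp only [smul_eq_mul, RCLike.inner_apply, conj_trivial]
  unfold semiFourier
  simp only [mul_one, Complex.ofReal_one]
  rw [← integral_const_mul]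
  congr 1
  funext v
  have hpi : (Real.pi : ℂ) ≠ 0 := by exact_mod_cast Real.pi_ne_zero
  have he : ((↑(-2 * Real.pi * ((2 * Real.pi)⁻¹ * ξ * v)) : ℂ) * Complex.I)
      = -(Complex.I * v * ξ) / 1 := by
    push_cast
    field_simp
  rw [he]
  ring

/-- Derivatives of `F_1 g` at 0 give the moments. -/
lemma iteratedDeriv_semiFourier_one (g : ℝ → ℂ) (hg : Continuous g)
    (hgc : HasCompactSupport g) (k : ℕ) :
    iteratedDeriv k (semiFourier 1 g) 0 =
      ((Real.sqrt (2 * Real.pi) : ℝ) : ℂ)⁻¹ * (-Complex.I) ^ k *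
        ∫ x : ℝ, (x : ℂ) ^ k * g x := by
  set c : ℂ := ((Real.sqrt (2 * Real.pi) : ℝ) : ℂ)⁻¹ with hc
  set G : ℝ → ℂ := fun x => c * g x with hG
  have hGc : Continuous G := continuous_const.mul hg
  have hGsupp : HasCompactSupport G := hgc.mul_left
  have hint : ∀ n : ℕ, Integrable (fun x : ℝ => (x : ℝ) ^ n • G x) := by
    intro n
    apply Continuous.integrable_of_hasCompactSupport
    · exact (continuous_pow n).smul hGc
    · exact hGsupp.smul_left (f := fun x : ℝ => x ^ n)
  have hint' : ∀ n : ℕ, (n : ℕ∞) ≤ (k : ℕ∞) → Integrable (fun x : ℝ => ‖x‖ ^ n * ‖G x‖) := by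
    intro n _
    have := (hint n).norm
    simpa [norm_smul] using this
  have hfun : semiFourier 1 g = fun ξ => (𝓕 G) ((2 * Real.pi)⁻¹ * ξ) := by
    funext ξ; exact semiFourier_one_eq g ξ
  have hF : ContDiff ℝ (k : ℕ∞) (𝓕 G) := Real.contDiff_fourier hint'
  rw [hfun, iteratedDeriv_comp_const_smul (hF.of_le le_rfl) _]
  rw [Real.iteratedDeriv_fourier (N := (k : ℕ∞))
    (fun n _ => hint n) le_rfl]
  simp only [mul_zero]
  rw [Real.fourier_eq']
  simp only [inner_zero_right, mul_zero, neg_zero, zero_mul, Complex.ofReal_zero,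
    Complex.exp_zero, one_smul]
  have : (fun v : ℝ => (-2 * ↑Real.pi * Complex.I * ↑v) ^ k • G v)
      = fun v : ℝ => ((-2 * (Real.pi : ℂ) * Complex.I) ^ k * c) * ((v : ℂ) ^ k * g v) := by
    funext v
    simp only [smul_eq_mul, hG, mul_pow]
    ring
  rw [this, integral_const_mul]
  have hp : ((2 : ℂ) * Real.pi) ≠ 0 := by
    simp only [ne_eq, mul_eq_zero, OfNat.ofNat_ne_zero, false_or, Complex.ofReal_eq_zero]
    exact Real.pi_ne_zero
  have hsmul : ∀ z : ℂ, ((2 * Real.pi)⁻¹ : ℝ) ^ k • z = (((2 * Real.pi : ℝ) : ℂ))⁻¹ ^ k * z := by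
    intro z
    rw [Complex.real_smul]
    push_cast
    ring
  rw [hsmul]
  have key : (((2 * Real.pi : ℝ) : ℂ))⁻¹ ^ k * (-2 * (Real.pi : ℂ) * Complex.I) ^ k
      = (-Complex.I) ^ k := by
    rw [← mul_pow]
    congr 1
    push_cast
    field_simp
  linear_combination (c * ∫ x : ℝ, (x : ℂ) ^ k * g x) * key

/-- **Fourier transform of the Taylor-projected remainder** (Lemma 6.3).
With `Ψ̃ := F₁[χ₀ φ]`, for all `ξ`:
`F_ħ[(χ₀φ) − ∑_{k=0}^d Π_k φ](ξ) = ħ^{-1/2} (Ψ̃(ξ/ħ) − ∑_{k=0}^d (1/k!)(ξ/ħ)^k Ψ̃^{(k)}(0))`. -/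
theorem fourier_taylor_remainder (χ₀ : ℝ → ℝ) (hχsm : ContDiff ℝ (⊤ : ℕ∞) χ₀)
    (hχc : HasCompactSupport χ₀)
    (φ : ℝ → ℂ) (hφsm : ContDiff ℝ (⊤ : ℕ∞) φ) (hφc : HasCompactSupport φ)
    (d : ℕ) (h : ℝ) (hh : 0 < h) (ξ : ℝ) :
    semiFourier h (fun x => (χ₀ x : ℂ) * φ x) ξ -
      ∑ k ∈ Finset.range (d + 1), PiFT χ₀ φ k h ξ =
    ((Real.sqrt h : ℝ) : ℂ)⁻¹ *
      (semiFourier 1 (fun x => (χ₀ x : ℂ) * φ x) (ξ / h) -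
        ∑ k ∈ Finset.range (d + 1),
          ((k.factorial : ℂ))⁻¹ * ((ξ / h : ℝ) : ℂ) ^ k *
            iteratedDeriv k (semiFourier 1 (fun x => (χ₀ x : ℂ) * φ x)) 0) := by
  set g : ℝ → ℂ := fun x => (χ₀ x : ℂ) * φ x with hg
  have hgcont : Continuous g := by
    exact (Complex.continuous_ofReal.comp hχsm.continuous).mul hφsm.continuous
  have hgsupp : HasCompactSupport g := by
    apply HasCompactSupport.mul_right
    exact hχc.comp_left (g := fun t : ℝ => (t : ℂ)) Complex.ofReal_zero
  rw [semiFourier_scale g h hh ξ, mul_sub, Finset.mul_sum]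
  congr 1
  apply Finset.sum_congr rfl
  intro k _
  rw [iteratedDeriv_semiFourier_one g hgcont hgsupp k]
  unfold PiFT
  have h0 : (h : ℂ) ≠ 0 := by exact_mod_cast hh.ne'
  have hs : Real.sqrt (2 * Real.pi * h) = Real.sqrt (2 * Real.pi) * Real.sqrt h := by
    rw [← Real.sqrt_mul (by positivity)]
  have hintg : (∫ x : ℝ, (x : ℂ) ^ k * (χ₀ x : ℂ) * φ x) = ∫ x : ℝ, (x : ℂ) ^ k * g x := by
    congr 1; funext x; rw [hg]; ring
  rw [hs, hintg]
  have hdiv : ((ξ / h : ℝ) : ℂ) = (ξ : ℂ) / h := by push_cast; ring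
  rw [hdiv]
  have h1 : ((Real.sqrt (2 * Real.pi) : ℝ) : ℂ) ≠ 0 := by
    exact_mod_cast ne_of_gt (Real.sqrt_pos.mpr (by positivity))
  have h2 : ((Real.sqrt h : ℝ) : ℂ) ≠ 0 := by
    exact_mod_cast ne_of_gt (Real.sqrt_pos.mpr hh)
  have h3 : ((k.factorial : ℕ) : ℂ) ≠ 0 := by exact_mod_cast k.factorial_ne_zero
  field_simp
  rw [Complex.ofReal_mul]
  field_simp
  ring
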